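/- Let n be a positive even integer, let V_1,…,V_q be (n−1)-dimensional oriented subspaces of ℝⁿ (q ∈ ℕ arbitrary), and let F be a complete oriented flag in ℝⁿ. Then there exists x ∈ ℝⁿ ∖ (V_1 ∪ ⋯ ∪ V_q) such that ori(V_i ⊕ ⟨x⟩) = ori([V_i, F]) for every i = 1,…,q. -/

import Mathlib

noncomputable section

/-- Sign of the determinant of the matrix whose columns are `v 0, …, v (n-1)`. -/
def oriV {n : ℕ} (v : Fin n → (Fin n → ℝ)) : ℝ :=
  Real.sign (Matrix.det (Matrix.of fun i j => v j i))

open Classical in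
/-- We represent a complete oriented flag `F` in `ℝⁿ` by a basis `(F 0, …, F (n-1))`:
the flag is `Fⁱ = span(F 0, …, F (i-1))`, oriented by this basis, with the positive
half-space `(Fⁱ)⁺` the one containing `F (i-1)`.  Two bases represent the same
oriented flag iff the transition matrix is upper triangular with positive diagonal.

Given a tuple `W` representing an oriented subspace `⟨W 0, …, W (k-1)⟩` and a flag `F`,
`extVec W F` is the first vector `F d` of the flag not contained in `span W`; it is a
vector of the positive half-space `(F^{d+1})⁺`, so `snoc W (extVec W F)` represents the
oriented subspace `[⟨W⟩, F]` of Bucher–Monod. -/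
def extVec {n k : ℕ} (W : Fin k → (Fin n → ℝ)) (F : Fin n → (Fin n → ℝ)) : Fin n → ℝ :=
  match Fin.find? (fun j => decide (F j ∉ Submodule.span ℝ (Set.range W))) with
  | some j => F j
  | none => 0

/-- `bracket (F_1, …, F_k)` is (the canonical representing tuple of) the oriented
`k`-dimensional subspace `[F_1, …, F_k]`, defined inductively by `[F_1] = F_1¹` and
`[F_1,…,F_k] = [[F_1,…,F_{k-1}], F_k]`. -/
def bracket {n : ℕ} : {k : ℕ} → (Fin k → (Fin n → (Fin n → ℝ))) → (Fin k → (Fin n → ℝ))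
  | 0, _ => Fin.elim0
  | (_ + 1), Fs =>
      Fin.snoc (bracket (Fs ∘ Fin.castSucc))
        (extVec (bracket (Fs ∘ Fin.castSucc)) (Fs (Fin.last _)))

/-- `coco(F_0,…,F_n) = ∏_{i=0}^{n} ori([F_0,…,F̂_i,…,F_n])`. -/
def coco {n : ℕ} (Fs : Fin (n + 1) → (Fin n → (Fin n → ℝ))) : ℝ :=
  ∏ i : Fin (n + 1), oriV (bracket (Fs ∘ i.succAbove))


/-- determinant of the square matrix with rows `W 0, …, W (m-1), x`. -/
def gdet {m : ℕ} (W : Fin m → Fin (m + 1) → ℝ) (x : Fin (m + 1) → ℝ) : ℝ :=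
  Matrix.det (Matrix.of (Fin.snoc W x))

theorem sign_gdet {m : ℕ} (W : Fin m → Fin (m + 1) → ℝ) (x : Fin (m + 1) → ℝ) :
    oriV (Fin.snoc W x) = Real.sign (gdet W x) := by
  unfold oriV gdet
  rw [show (Matrix.of fun i j => (Fin.snoc W x : Fin (m + 1) → Fin (m + 1) → ℝ) j i)
      = (Matrix.of (Fin.snoc W x) : Matrix (Fin (m + 1)) (Fin (m + 1)) ℝ).transpose from rfl,
    Matrix.det_transpose]

theorem gdet_eq_zero {m : ℕ} {W : Fin m → Fin (m + 1) → ℝ} {y : Fin (m + 1) → ℝ}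
    (hy : y ∈ Submodule.span ℝ (Set.range W)) : gdet W y = 0 := by
  by_contra h0
  have hunit : IsUnit (Matrix.of (Fin.snoc W y) : Matrix (Fin (m + 1)) (Fin (m + 1)) ℝ) :=
    (Matrix.isUnit_iff_isUnit_det _).2 (isUnit_iff_ne_zero.2 h0)
  have hli : LinearIndependent ℝ (Fin.snoc W y : Fin (m + 1) → (Fin (m + 1) → ℝ)) :=
    Matrix.linearIndependent_rows_iff_isUnit.2 hunit
  exact (linearIndependent_fin_snoc.1 hli).2 hy

theorem gdet_ne_zero {m : ℕ} {W : Fin m → Fin (m + 1) → ℝ} (hW : LinearIndependent ℝ W)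
    {y : Fin (m + 1) → ℝ} (hy : y ∉ Submodule.span ℝ (Set.range W)) : gdet W y ≠ 0 := by
  have hli : LinearIndependent ℝ (Fin.snoc W y : Fin (m + 1) → (Fin (m + 1) → ℝ)) :=
    linearIndependent_fin_snoc.2 ⟨hW, hy⟩
  have hunit : IsUnit (Matrix.of (Fin.snoc W y) : Matrix (Fin (m + 1)) (Fin (m + 1)) ℝ) :=
    Matrix.linearIndependent_rows_iff_isUnit.1 hli
  exact isUnit_iff_ne_zero.1 ((Matrix.isUnit_iff_isUnit_det _).1 hunit)

theorem gdet_sum {m : ℕ} (W : Fin m → Fin (m + 1) → ℝ) (s : Finset (Fin (m + 1)))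
    (f : Fin (m + 1) → ℝ) (w : Fin (m + 1) → (Fin (m + 1) → ℝ)) :
    gdet W (∑ j ∈ s, f j • w j) = ∑ j ∈ s, f j * gdet W (w j) := by
  have hL : ∀ y, gdet W y =
      ((Matrix.detRowAlternating (R := ℝ) (n := Fin (m + 1))).toMultilinearMap.toLinearMap
        (Fin.snoc W 0) (Fin.last m)) y := by
    intro y
    show gdet W y = Matrix.detRowAlternating
        (Function.update (Fin.snoc W (0 : Fin (m + 1) → ℝ)) (Fin.last m) y)
    rw [Fin.update_snoc_last]
    rfl
  simp only [hL, map_sum, map_smul, smul_eq_mul]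

theorem sign_eq_sign {a b : ℝ} (h : 0 < a * b) : Real.sign b = Real.sign a := by
  rcases lt_trichotomy a 0 with h1 | h1 | h1
  · have hb : b < 0 := by nlinarith
    rw [Real.sign_of_neg hb, Real.sign_of_neg h1]
  · rw [h1, zero_mul] at h; exact absurd h (lt_irrefl 0)
  · have hb : 0 < b := by nlinarith
    rw [Real.sign_of_pos hb, Real.sign_of_pos h1]

/-- given `(n−1)`-dimensional oriented subspaces `V_1,…,V_q` of `ℝⁿ`
(represented by linearly independent `(n-1)`-tuples) and a complete oriented flag `F`,
there is `x ∈ ℝⁿ ∖ (V_1 ∪ ⋯ ∪ V_q)` with `ori(V_i ⊕ ⟨x⟩) = ori([V_i, F])` for all `i`. -/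
theorem stmt10 (n : ℕ) (hn : 0 < n) (he : Even n) (q : ℕ)
    (V : Fin q → (Fin (n - 1) → (Fin n → ℝ))) (hV : ∀ i, LinearIndependent ℝ (V i))
    (F : Fin n → (Fin n → ℝ)) (hF : LinearIndependent ℝ F) :
    ∃ x : Fin n → ℝ,
      (∀ i, x ∉ Submodule.span ℝ (Set.range (V i))) ∧
      (∀ i, oriV ((Fin.snoc (V i) x) ∘ Fin.cast (by omega : n = n - 1 + 1)) =
        oriV ((Fin.snoc (V i) (extVec (V i) F)) ∘ Fin.cast (by omega : n = n - 1 + 1))) := by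
  classical
  obtain ⟨m, rfl⟩ : ∃ m, n = m + 1 := ⟨n - 1, by omega⟩
  -- the span of F is everything
  have hspanF : Submodule.span ℝ (Set.range F) = ⊤ := by
    apply hF.span_eq_top_of_card_eq_finrank
    simp [Module.finrank_fin_fun]
  -- some flag vector lies outside each hyperplane
  have hex : ∀ i, ∃ j, F j ∉ Submodule.span ℝ (Set.range (V i)) := by
    intro i
    by_contra h
    push_neg at h
    have hVtop : Submodule.span ℝ (Set.range (V i)) = ⊤ := by
      refine top_le_iff.1 ?_
      rw [← hspanF]
      exact Submodule.span_le.2 (Set.range_subset_iff.2 h)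
    have hfr := Module.finrank_eq_card_basis (Module.Basis.mk (hV i) (le_of_eq hVtop.symm))
    rw [Module.finrank_fin_fun, Fintype.card_fin] at hfr
    omega
  -- identify the extension vector
  have hext : ∀ i, ∃ dd : Fin (m + 1),
      extVec (V i) F = F dd ∧ F dd ∉ Submodule.span ℝ (Set.range (V i)) ∧
      ∀ j, j < dd → F j ∈ Submodule.span ℝ (Set.range (V i)) := by
    intro i
    obtain ⟨dd, hdd⟩ := Option.isSome_iff_exists.1 (Fin.isSome_find?_of_eq_true
      (p := fun j => decide (F j ∉ Submodule.span ℝ (Set.range (V i))))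
      (i := (hex i).choose) (by simpa using (hex i).choose_spec))
    have hm := Fin.mem_find?_iff.1 (Option.mem_def.2 hdd)
    refine ⟨dd, ?_, by simpa using hm.1, fun j hj => by simpa using hm.2 j hj⟩
    unfold extVec
    rw [hdd]
  choose d hd1 hd2 hd3 using hext
  have hcd : ∀ i, gdet (V i) (F (d i)) ≠ 0 := fun i => gdet_ne_zero (hV i) (hd2 i)
  have hc0 : ∀ i j, j < d i → gdet (V i) (F j) = 0 := fun i j hj => gdet_eq_zero (hd3 i j hj)
  -- the rescaled polynomial Q i ε
  have hQ0 : ∀ i, (∑ j : Fin (m + 1), (0:ℝ) ^ ((j : ℕ) - (d i : ℕ)) * gdet (V i) (F j))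
      = gdet (V i) (F (d i)) := by
    intro i
    rw [Finset.sum_eq_single (d i)]
    · simp
    · intro j _ hj
      rcases lt_or_gt_of_ne hj with h | h
      · rw [hc0 i j h, mul_zero]
      · have h' : (d i : ℕ) < (j : ℕ) := h
        rw [zero_pow (by omega : (j : ℕ) - (d i : ℕ) ≠ 0), zero_mul]
    · simp
  have hev : ∀ᶠ ε in nhds (0:ℝ), ∀ i,
      0 < gdet (V i) (F (d i)) * ∑ j : Fin (m + 1), ε ^ ((j : ℕ) - (d i : ℕ)) * gdet (V i) (F j) := by
    rw [Filter.eventually_all]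
    intro i
    have hcont : Continuous fun ε : ℝ =>
        gdet (V i) (F (d i)) * ∑ j : Fin (m + 1), ε ^ ((j : ℕ) - (d i : ℕ)) * gdet (V i) (F j) :=
      continuous_const.mul (continuous_finset_sum _ fun j _ => (continuous_pow _).mul continuous_const)
    have h0 : 0 < gdet (V i) (F (d i)) *
        ∑ j : Fin (m + 1), (0:ℝ) ^ ((j : ℕ) - (d i : ℕ)) * gdet (V i) (F j) := by
      rw [hQ0 i]; exact mul_self_pos.2 (hcd i)
    exact (hcont.continuousAt (x := (0:ℝ))).eventually (lt_mem_nhds h0)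
  obtain ⟨ε, hεall, hεpos⟩ := ((hev.filter_mono nhdsWithin_le_nhds).and
    (eventually_mem_nhdsWithin (s := Set.Ioi (0:ℝ)) (a := 0))).exists
  rw [Set.mem_Ioi] at hεpos
  -- the witness
  refine ⟨∑ j : Fin (m + 1), ε ^ (j : ℕ) • F j, ?_, ?_⟩ <;> intro i
  all_goals {
    have hsum : gdet (V i) (∑ j : Fin (m + 1), ε ^ (j : ℕ) • F j)
        = ∑ j : Fin (m + 1), ε ^ (j : ℕ) * gdet (V i) (F j) := gdet_sum (V i) _ _ F
    have hfac : (∑ j : Fin (m + 1), ε ^ (j : ℕ) * gdet (V i) (F j))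
        = ε ^ (d i : ℕ) * ∑ j : Fin (m + 1), ε ^ ((j : ℕ) - (d i : ℕ)) * gdet (V i) (F j) := by
      rw [Finset.mul_sum]
      refine Finset.sum_congr rfl fun j _ => ?_
      rcases lt_or_ge j (d i) with h | h
      · simp [hc0 i j h]
      · have h' : (d i : ℕ) ≤ (j : ℕ) := h
        rw [← mul_assoc, ← pow_add]
        congr 2
        omega
    have hpos : 0 < gdet (V i) (F (d i)) * gdet (V i) (∑ j : Fin (m + 1), ε ^ (j : ℕ) • F j) := by
      rw [hsum, hfac]
      nlinarith [pow_pos hεpos ((d i : ℕ)), hεall i]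
    first
    | · -- nonmembership
        intro hx
        rw [gdet_eq_zero hx, mul_zero] at hpos
        exact lt_irrefl 0 hpos
    | · -- signs
        refine (sign_gdet (V i) _).trans (Eq.trans ?_ (sign_gdet (V i) _).symm)
        rw [hd1 i]
        exact sign_eq_sign hpos
  }


end
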